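/- arXiv:2409.17544 — 9 statements merged into one kernel-verified Lean document; each statement's English description precedes it below -/
import Mathlib

section
/- Let m ≥ 2, let c be a generalized Omnibus weight tensor, let ρ ∈ [−1,1], and let s1 ≠ s2 ∈ {1,…,m}. Then ∑_{q=1}^m β_q(s1,s2)² ≤ 2m², and hence the induced correlation satisfies 𝔯(s1,s2) = 1 − ((1−ρ)/(2m²))·∑_{q=1}^m β_q(s1,s2)² ≥ ρ. -/
open Finset

/-- Cumulative weight `α(k,q) = ∑_ℓ c(q,k,ℓ)`. -/
noncomputable def alphaW (m : ℕ) (c : Fin m → Fin m → Fin m → ℝ) (k q : Fin m) : ℝ :=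
  ∑ ℓ, c q k ℓ

/-- `β_q(s1,s2) = α(s1,q) − α(s2,q)`. -/
noncomputable def betaW (m : ℕ) (c : Fin m → Fin m → Fin m → ℝ) (q s1 s2 : Fin m) : ℝ :=
  alphaW m c s1 q - alphaW m c s2 q

/-- Generalized Omnibus weight tensor. -/
def IsGenOmni (m : ℕ) (c : Fin m → Fin m → Fin m → ℝ) : Prop :=
  (∀ q i j, c q i j = c q j i) ∧
  (∀ q i j, c q i j ∈ Set.Icc (0:ℝ) 1) ∧
  (∀ i j, ∑ q, c q i j = 1)

theorem stmt_1 (m : ℕ) (hm : 2 ≤ m) (c : Fin m → Fin m → Fin m → ℝ)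
    (hc : IsGenOmni m c) (ρ : ℝ) (hρ : ρ ∈ Set.Icc (-1 : ℝ) 1)
    (s1 s2 : Fin m) (hs : s1 ≠ s2) :
    (∑ q, (betaW m c q s1 s2)^2 ≤ 2 * (m : ℝ)^2) ∧
    1 - ((1 - ρ) / (2 * (m : ℝ)^2)) * ∑ q, (betaW m c q s1 s2)^2 ≥ ρ := by
  obtain ⟨hsym, hrange, hsum⟩ := hc
  have hα0 : ∀ k q : Fin m, 0 ≤ alphaW m c k q := fun k q =>
    Finset.sum_nonneg fun ℓ _ => (hrange q k ℓ).1
  have hαm : ∀ k q : Fin m, alphaW m c k q ≤ m := by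
    intro k q
    calc alphaW m c k q ≤ ∑ _ℓ : Fin m, (1:ℝ) :=
          Finset.sum_le_sum fun ℓ _ => (hrange q k ℓ).2
      _ = m := by simp
  have hαsum : ∀ k : Fin m, ∑ q, alphaW m c k q = m := by
    intro k
    unfold alphaW
    rw [Finset.sum_comm]
    simp [hsum]
  have hβabs : ∀ q : Fin m, |betaW m c q s1 s2| ≤ m := by
    intro q
    rw [abs_le, betaW]
    constructor <;> nlinarith [hα0 s1 q, hα0 s2 q, hαm s1 q, hαm s2 q]
  have hβsum : ∀ q : Fin m, |betaW m c q s1 s2| ≤ alphaW m c s1 q + alphaW m c s2 q := by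
    intro q
    rw [abs_le, betaW]
    constructor <;> nlinarith [hα0 s1 q, hα0 s2 q]
  have hS : ∑ q, (betaW m c q s1 s2)^2 ≤ 2 * (m : ℝ)^2 := by
    calc ∑ q, (betaW m c q s1 s2)^2
        ≤ ∑ q, (m : ℝ) * (alphaW m c s1 q + alphaW m c s2 q) := by
          apply Finset.sum_le_sum
          intro q _
          have h1 := hβabs q
          have h2 := hβsum q
          have := abs_nonneg (betaW m c q s1 s2)
          nlinarith [sq_abs (betaW m c q s1 s2)]
      _ = (m : ℝ) * (∑ q, alphaW m c s1 q + ∑ q, alphaW m c s2 q) := by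
          rw [← Finset.mul_sum, Finset.sum_add_distrib]
      _ = 2 * (m : ℝ)^2 := by rw [hαsum s1, hαsum s2]; ring
  refine ⟨hS, ?_⟩
  have hm2 : (0:ℝ) < 2 * (m : ℝ)^2 := by positivity
  have hρ1 : ρ ≤ 1 := hρ.2
  have hS0 : 0 ≤ ∑ q, (betaW m c q s1 s2)^2 :=
    Finset.sum_nonneg fun q _ => sq_nonneg _
  have key : ((1 - ρ) / (2 * (m : ℝ)^2)) * ∑ q, (betaW m c q s1 s2)^2 ≤ 1 - ρ := by
    rw [div_mul_eq_mul_div, div_le_iff₀ hm2]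
    nlinarith
  linarith
end

section
/- Let m ≥ 2, let c be a WOMNI weight tensor, let ρ ∈ [−1,1], and let s1 ≠ s2 ∈ {1,…,m}. Then ∑_{q=1}^m β_q(s1,s2)² ≤ 2·(max_{q} α(q,q))² + (m − 2), and hence 𝔯(s1,s2) ≥ 1 − ((1−ρ)/(2m²))·( 2·(max_{q} α(q,q))² + m − 2 ). -/
open Finset

/-- WOMNI (weighted Omnibus) weight tensor. -/
def IsWOMNI (m : ℕ) (c : Fin m → Fin m → Fin m → ℝ) : Prop :=
  (∀ q i j, c q i j = c q j i) ∧
  (∀ q i j, q ≠ i → q ≠ j → c q i j = 0) ∧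
  (∀ i, c i i i = 1) ∧
  (∀ q i, q ≠ i → c q i i = 0) ∧
  (∀ i j, i ≠ j → c i i j ∈ Set.Icc (0:ℝ) 1 ∧ c i i j + c j i j = 1)

/-- The tensor induces flat correlation: `S(s1,s2) = ∑_q β_q(s1,s2)²` is the same
for all pairs `s1 ≠ s2`. -/
def InducesFlat (m : ℕ) (c : Fin m → Fin m → Fin m → ℝ) : Prop :=
  ∀ s1 s2 t1 t2 : Fin m, s1 ≠ s2 → t1 ≠ t2 →
    ∑ q, (betaW m c q s1 s2)^2 = ∑ q, (betaW m c q t1 t2)^2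

lemma alphaW_off (m : ℕ) (c : Fin m → Fin m → Fin m → ℝ) (hc : IsWOMNI m c)
    (k q : Fin m) (hkq : k ≠ q) : alphaW m c k q ∈ Set.Icc (0:ℝ) 1 := by
  obtain ⟨hsym, hzero, hdiag, hodiag, hpair⟩ := hc
  have : alphaW m c k q = c q k q := by
    rw [alphaW, Finset.sum_eq_single q]
    · intro b _ hb
      exact hzero q k b (Ne.symm hkq) (Ne.symm hb)
    · intro h; exact absurd (Finset.mem_univ q) h
  rw [this, hsym q k q]
  exact (hpair q k (Ne.symm hkq)).1

lemma alphaW_diag_ge_one (m : ℕ) (c : Fin m → Fin m → Fin m → ℝ) (hc : IsWOMNI m c)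
    (k : Fin m) : 1 ≤ alphaW m c k k := by
  obtain ⟨hsym, hzero, hdiag, hodiag, hpair⟩ := hc
  have hnn : ∀ ℓ ∈ Finset.univ, (0:ℝ) ≤ c k k ℓ := by
    intro ℓ _
    by_cases h : k = ℓ
    · subst h; rw [hdiag]; norm_num
    · exact (hpair k ℓ h).1.1
  calc (1:ℝ) = c k k k := (hdiag k).symm
    _ ≤ ∑ ℓ, c k k ℓ := Finset.single_le_sum hnn (Finset.mem_univ k)

theorem stmt_2 (m : ℕ) (hm : 2 ≤ m) (c : Fin m → Fin m → Fin m → ℝ)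
    (hc : IsWOMNI m c) (ρ : ℝ) (hρ : ρ ∈ Set.Icc (-1 : ℝ) 1)
    (s1 s2 : Fin m) (hs : s1 ≠ s2)
    (M : ℝ) (hM : IsGreatest (Set.range fun q : Fin m => alphaW m c q q) M) :
    (∑ q, (betaW m c q s1 s2)^2 ≤ 2 * M^2 + ((m : ℝ) - 2)) ∧
    1 - ((1 - ρ) / (2 * (m : ℝ)^2)) * ∑ q, (betaW m c q s1 s2)^2
      ≥ 1 - ((1 - ρ) / (2 * (m : ℝ)^2)) * (2 * M^2 + (m : ℝ) - 2) := by
  have hMub : ∀ q : Fin m, alphaW m c q q ≤ M := fun q => hM.2 ⟨q, rfl⟩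
  -- pointwise bounds
  have hb1 : (betaW m c s1 s1 s2)^2 ≤ M^2 := by
    have h1 := alphaW_diag_ge_one m c hc s1
    have h2 := alphaW_off m c hc s2 s1 (Ne.symm hs)
    have h3 := hMub s1
    obtain ⟨h2a, h2b⟩ := h2
    rw [betaW]
    nlinarith
  have hb2 : (betaW m c s2 s1 s2)^2 ≤ M^2 := by
    have h1 := alphaW_diag_ge_one m c hc s2
    have h2 := alphaW_off m c hc s1 s2 hs
    have h3 := hMub s2
    obtain ⟨h2a, h2b⟩ := h2
    rw [betaW]
    nlinarith
  have hbq : ∀ q : Fin m, q ≠ s1 → q ≠ s2 → (betaW m c q s1 s2)^2 ≤ 1 := by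
    intro q hq1 hq2
    obtain ⟨a1, b1⟩ := alphaW_off m c hc s1 q (Ne.symm hq1)
    obtain ⟨a2, b2⟩ := alphaW_off m c hc s2 q (Ne.symm hq2)
    rw [betaW]
    nlinarith
  have hsplit : ∑ q, (betaW m c q s1 s2)^2 =
      (∑ q ∈ Finset.univ \ {s1, s2}, (betaW m c q s1 s2)^2) +
      (∑ q ∈ ({s1, s2} : Finset (Fin m)), (betaW m c q s1 s2)^2) :=
    (Finset.sum_sdiff (Finset.subset_univ _)).symm
  have hpairsum : (∑ q ∈ ({s1, s2} : Finset (Fin m)), (betaW m c q s1 s2)^2)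
      = (betaW m c s1 s1 s2)^2 + (betaW m c s2 s1 s2)^2 := Finset.sum_pair hs
  have hcard : (Finset.univ \ {s1, s2} : Finset (Fin m)).card = m - 2 := by
    rw [Finset.card_sdiff_of_subset (Finset.subset_univ _), Finset.card_pair hs]
    simp
  have hrest : (∑ q ∈ Finset.univ \ {s1, s2}, (betaW m c q s1 s2)^2) ≤ ((m : ℝ) - 2) := by
    have := Finset.sum_le_card_nsmul (Finset.univ \ {s1, s2})
      (fun q => (betaW m c q s1 s2)^2) 1 (by
        intro q hq
        simp only [Finset.mem_sdiff, Finset.mem_insert, Finset.mem_singleton] at hq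
        push_neg at hq
        exact hbq q hq.2.1 hq.2.2)
    rw [hcard, nsmul_eq_mul, mul_one] at this
    calc (∑ q ∈ Finset.univ \ {s1, s2}, (betaW m c q s1 s2)^2) ≤ ((m - 2 : ℕ) : ℝ) := this
      _ = (m : ℝ) - 2 := by
          rw [Nat.cast_sub hm]; norm_num
  have hsum : ∑ q, (betaW m c q s1 s2)^2 ≤ 2 * M^2 + ((m : ℝ) - 2) := by
    rw [hsplit, hpairsum]; linarith
  refine ⟨hsum, ?_⟩
  have hk : 0 ≤ (1 - ρ) / (2 * (m : ℝ)^2) := by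
    apply div_nonneg
    · linarith [hρ.2]
    · positivity
  have := mul_le_mul_of_nonneg_left hsum hk
  linarith
end

section
/- Let m ≥ 2 and let c be a WOMNI weight tensor. If there exists a real number A such that α(q,q) = A for every q ∈ {1,…,m}, then necessarily A = (m+1)/2. -/
open Finset

theorem stmt_4 (m : ℕ) (hm : 2 ≤ m) (c : Fin m → Fin m → Fin m → ℝ)
    (hc : IsWOMNI m c) (A : ℝ) (hA : ∀ q : Fin m, alphaW m c q q = A) :
    A = ((m : ℝ) + 1) / 2 := by
  obtain ⟨hsym, _, hdiag, _, hpair⟩ := hc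
  set T : ℝ := ∑ q : Fin m, ∑ ℓ : Fin m, c q q ℓ with hT
  have hTA : T = m * A := by
    rw [hT]
    have : ∀ q : Fin m, ∑ ℓ : Fin m, c q q ℓ = A := fun q => hA q
    rw [Finset.sum_congr rfl (fun q _ => this q)]
    simp [mul_comm]
  have h2T : 2 * T = m * m + m := by
    have hswap : T = ∑ q : Fin m, ∑ ℓ : Fin m, c ℓ ℓ q := Finset.sum_comm ..
    have : 2 * T = ∑ q : Fin m, ∑ ℓ : Fin m, (c q q ℓ + c ℓ ℓ q) := by
      simp only [Finset.sum_add_distrib]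
      rw [← hT, ← hswap]; ring
    rw [this]
    have hval : ∀ q ℓ : Fin m, c q q ℓ + c ℓ ℓ q =
        if q = ℓ then 2 else 1 := by
      intro q ℓ
      by_cases h : q = ℓ
      · subst h; simp [hdiag q]; norm_num
      · have h1 := (hpair q ℓ h).2
        have h2 : c ℓ ℓ q = c ℓ q ℓ := hsym ℓ ℓ q
        simp [h, h2, h1]
    calc ∑ q : Fin m, ∑ ℓ : Fin m, (c q q ℓ + c ℓ ℓ q)
        = ∑ q : Fin m, ∑ ℓ : Fin m, (if q = ℓ then (2:ℝ) else 1) := by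
          exact Finset.sum_congr rfl fun q _ => Finset.sum_congr rfl fun ℓ _ => hval q ℓ
      _ = m * m + m := by
          have hinner : ∀ q : Fin m, ∑ ℓ : Fin m, (if q = ℓ then (2:ℝ) else 1) = m + 1 := by
            intro q
            have he : ∀ ℓ : Fin m, (if q = ℓ then (2:ℝ) else 1) = 1 + (if q = ℓ then 1 else 0) := by
              intro ℓ; split <;> norm_num
            simp [he, Finset.sum_add_distrib, Finset.sum_ite_eq]
          rw [Finset.sum_congr rfl (fun q _ => hinner q)]
          simp
  have hm0 : (m : ℝ) ≠ 0 := by positivity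
  have : (m : ℝ) * (2 * A) = (m : ℝ) * ((m : ℝ) + 1) := by
    have := h2T
    rw [hTA] at this
    nlinarith [this]
  have := mul_left_cancel₀ hm0 this
  linarith
end

section
/- Let m ≥ 2, let ρ ∈ [−1,1], and let c be a WOMNI weight tensor that induces flat correlation. Then for every pair s1 ≠ s2 ∈ {1,…,m}, the induced correlation satisfies 𝔯(s1,s2) ≥ 3/4 + ρ/4 − (1−ρ)·( 11/(2m) + 24/m² ). -/
open Finset

lemma alpha_off {m : ℕ} {c : Fin m → Fin m → Fin m → ℝ} (hc : IsWOMNI m c)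
    {k q : Fin m} (h : k ≠ q) : alphaW m c k q = c q q k := by
  unfold alphaW
  rw [Finset.sum_eq_single q]
  · exact hc.1 q k q
  · intro ℓ _ hℓ
    exact hc.2.1 q k ℓ (Ne.symm h) (Ne.symm hℓ)
  · intro h'; exact absurd (mem_univ q) h'

lemma alpha_diag_ge_one {m : ℕ} {c : Fin m → Fin m → Fin m → ℝ} (hc : IsWOMNI m c)
    (k : Fin m) : 1 ≤ alphaW m c k k := by
  unfold alphaW
  have h1 : c k k k = 1 := hc.2.2.1 k
  calc (1:ℝ) = c k k k := h1.symm
    _ ≤ ∑ ℓ, c k k ℓ := by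
        apply Finset.single_le_sum (f := fun ℓ => c k k ℓ) _ (mem_univ k)
        intro ℓ _
        show (0:ℝ) ≤ c k k ℓ
        by_cases hℓ : ℓ = k
        · rw [hℓ, h1]; norm_num
        · exact (hc.2.2.2.2 k ℓ (Ne.symm hℓ)).1.1

lemma sum_alpha_diag {m : ℕ} {c : Fin m → Fin m → Fin m → ℝ} (hc : IsWOMNI m c) :
    ∑ k, alphaW m c k k = (m : ℝ) * ((m : ℝ) + 1) / 2 := by
  have key : (2:ℝ) * ∑ k, alphaW m c k k = (m:ℝ)^2 + m := by
    have hsw : ∑ k : Fin m, ∑ ℓ : Fin m, c ℓ ℓ k = ∑ k : Fin m, ∑ ℓ : Fin m, c k k ℓ :=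
      Finset.sum_comm
    have : (2:ℝ) * ∑ k, alphaW m c k k
        = ∑ k : Fin m, ∑ ℓ : Fin m, (c k k ℓ + c ℓ ℓ k) := by
      unfold alphaW
      rw [two_mul]
      nth_rewrite 2 [← hsw]
      rw [← Finset.sum_add_distrib]
      congr 1; ext k
      rw [← Finset.sum_add_distrib]
    rw [this]
    have inner : ∀ k : Fin m, ∑ ℓ : Fin m, (c k k ℓ + c ℓ ℓ k)
        = ∑ ℓ : Fin m, ((1:ℝ) + if ℓ = k then 1 else 0) := by
      intro k
      apply Finset.sum_congr rfl
      intro ℓ _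
      by_cases hℓ : ℓ = k
      · subst hℓ; rw [hc.2.2.1 ℓ]; simp
      · have h2 := (hc.2.2.2.2 k ℓ (Ne.symm hℓ)).2
        have h3 : c ℓ k ℓ = c ℓ ℓ k := hc.1 ℓ k ℓ
        simp [hℓ]
        linarith [h2, h3]
    rw [Finset.sum_congr rfl (fun k _ => inner k)]
    simp [Finset.sum_add_distrib, Finset.card_univ]
    ring
  linarith

lemma c_mem_Icc {m : ℕ} {c : Fin m → Fin m → Fin m → ℝ} (hc : IsWOMNI m c)
    {i j : Fin m} (h : i ≠ j) : 0 ≤ c i i j ∧ c i i j ≤ 1 := by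
  have := (hc.2.2.2.2 i j h).1
  exact ⟨this.1, this.2⟩

/-- Sum of squared betas for a specific pair is at most α(t1,t1)² + α(t2,t2)² + (m-2). -/
lemma sum_beta_sq_le {m : ℕ} {c : Fin m → Fin m → Fin m → ℝ} (hc : IsWOMNI m c)
    {t1 t2 : Fin m} (ht : t1 ≠ t2) :
    ∑ q, (betaW m c q t1 t2)^2
      ≤ (alphaW m c t1 t1)^2 + (alphaW m c t2 t2)^2 + ((m:ℝ) - 2) := by
  classical
  set g : Fin m → ℝ := fun q => (betaW m c q t1 t2)^2 with hg
  have ht2 : t2 ∈ (univ : Finset (Fin m)).erase t1 := by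
    simp [Finset.mem_erase, Ne.symm ht]
  have hsplit : ∑ q, g q = g t1 + (g t2 + ∑ q ∈ ((univ : Finset (Fin m)).erase t1).erase t2, g q) := by
    rw [Finset.add_sum_erase _ g ht2, Finset.add_sum_erase _ g (mem_univ t1)]
  have hb1 : g t1 ≤ (alphaW m c t1 t1)^2 := by
    have h1 : alphaW m c t2 t1 = c t1 t1 t2 := alpha_off hc (Ne.symm ht)
    have h2 := c_mem_Icc hc ht
    have h3 := alpha_diag_ge_one hc t1
    simp only [hg, betaW, h1]
    nlinarith [h2.1, h2.2, h3]
  have hb2 : g t2 ≤ (alphaW m c t2 t2)^2 := by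
    have h1 : alphaW m c t1 t2 = c t2 t2 t1 := alpha_off hc ht
    have h2 := c_mem_Icc hc (Ne.symm ht)
    have h3 := alpha_diag_ge_one hc t2
    simp only [hg, betaW, h1]
    nlinarith [h2.1, h2.2, h3]
  have hb3 : ∑ q ∈ ((univ : Finset (Fin m)).erase t1).erase t2, g q ≤ (m:ℝ) - 2 := by
    have hcard : (((univ : Finset (Fin m)).erase t1).erase t2).card = m - 2 := by
      rw [Finset.card_erase_of_mem ht2, Finset.card_erase_of_mem (mem_univ t1)]
      simp only [Finset.card_univ, Fintype.card_fin]
      omega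
    have hbound : ∀ q ∈ ((univ : Finset (Fin m)).erase t1).erase t2, g q ≤ 1 := by
      intro q hq
      have hq2 : q ≠ t2 := (Finset.mem_erase.mp hq).1
      have hq1 : q ≠ t1 := (Finset.mem_erase.mp (Finset.mem_erase.mp hq).2).1
      have h1 : alphaW m c t1 q = c q q t1 := alpha_off hc (Ne.symm hq1)
      have h2 : alphaW m c t2 q = c q q t2 := alpha_off hc (Ne.symm hq2)
      have h3 := c_mem_Icc hc hq1
      have h4 := c_mem_Icc hc hq2
      simp only [hg, betaW, h1, h2]
      nlinarith [h3.1, h3.2, h4.1, h4.2]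
    calc ∑ q ∈ ((univ : Finset (Fin m)).erase t1).erase t2, g q
        ≤ (((univ : Finset (Fin m)).erase t1).erase t2).card • (1:ℝ) :=
          Finset.sum_le_card_nsmul _ _ 1 hbound
      _ = ((m : ℝ) - 2) := by
          have h2m : (2:ℕ) ≤ m := by
            have := Fintype.one_lt_card_iff.mpr ⟨t1, t2, ht⟩
            simp at this; omega
          rw [nsmul_eq_mul, mul_one, hcard, Nat.cast_sub h2m]
          norm_num
  calc ∑ q, g q = g t1 + (g t2 + ∑ q ∈ ((univ : Finset (Fin m)).erase t1).erase t2, g q) := hsplit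
    _ ≤ (alphaW m c t1 t1)^2 + ((alphaW m c t2 t2)^2 + ((m:ℝ) - 2)) := by
        gcongr
    _ = _ := by ring

theorem stmt_5 (m : ℕ) (hm : 2 ≤ m) (ρ : ℝ) (hρ : ρ ∈ Set.Icc (-1 : ℝ) 1)
    (c : Fin m → Fin m → Fin m → ℝ) (hc : IsWOMNI m c) (hflat : InducesFlat m c)
    (s1 s2 : Fin m) (hs : s1 ≠ s2) :
    1 - ((1 - ρ) / (2 * (m : ℝ)^2)) * ∑ q, (betaW m c q s1 s2)^2
      ≥ 3/4 + ρ/4 - (1 - ρ) * (11 / (2 * (m : ℝ)) + 24 / (m : ℝ)^2) := by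
  classical
  set M : ℝ := (m : ℝ) with hM
  have hM2 : (2:ℝ) ≤ M := by rw [hM]; exact_mod_cast hm
  have hM0 : (0:ℝ) < M := by linarith
  set f : Fin m → ℝ := fun k => alphaW m c k k with hf
  -- pick the two smallest values of f
  obtain ⟨t1, _, ht1min⟩ := Finset.exists_min_image (univ : Finset (Fin m)) f
    ⟨s1, mem_univ s1⟩
  have hne : ((univ : Finset (Fin m)).erase t1).Nonempty := by
    have : 1 < (univ : Finset (Fin m)).card := by simp [Finset.card_univ]; omega
    obtain ⟨x, hx, y, hy, hxy⟩ := Finset.one_lt_card.mp this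
    by_cases h : x = t1
    · exact ⟨y, Finset.mem_erase.mpr ⟨by rw [← h]; exact hxy.symm, mem_univ y⟩⟩
    · exact ⟨x, Finset.mem_erase.mpr ⟨h, mem_univ x⟩⟩
  obtain ⟨t2, ht2mem, ht2min⟩ := Finset.exists_min_image _ f hne
  have ht : t1 ≠ t2 := Ne.symm (Finset.mem_erase.mp ht2mem).1
  -- bound f t2
  have hsum : ∑ k, f k = M * (M + 1) / 2 := sum_alpha_diag hc
  have hf1ge : 1 ≤ f t1 := alpha_diag_ge_one hc t1
  have hcard : ((univ : Finset (Fin m)).erase t1).card = m - 1 := by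
    rw [Finset.card_erase_of_mem (mem_univ t1)]; simp [Finset.card_univ]
  have hsmul : (((univ : Finset (Fin m)).erase t1).card : ℝ) * f t2
      ≤ ∑ k ∈ (univ : Finset (Fin m)).erase t1, f k := by
    have := Finset.card_nsmul_le_sum ((univ : Finset (Fin m)).erase t1) f (f t2)
      (fun x hx => ht2min x hx)
    simpa [nsmul_eq_mul] using this
  have herase : ∑ k ∈ (univ : Finset (Fin m)).erase t1, f k = M * (M + 1) / 2 - f t1 := by
    rw [Finset.sum_erase_eq_sub (mem_univ t1), hsum]
  have hcardR : (((univ : Finset (Fin m)).erase t1).card : ℝ) = M - 1 := by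
    rw [hcard, Nat.cast_sub (by omega : 1 ≤ m), hM]; norm_num
  have ht2le : f t2 ≤ (M + 2) / 2 := by
    rw [hcardR, herase] at hsmul
    have h1 : (M - 1) * f t2 ≤ (M - 1) * ((M + 2) / 2) := by nlinarith
    have hpos : (0:ℝ) < M - 1 := by linarith
    exact le_of_mul_le_mul_left h1 hpos
  have ht1le : f t1 ≤ (M + 2) / 2 := le_trans (ht1min t2 (mem_univ t2)) ht2le
  -- final sum bound
  have hSb : ∑ q, (betaW m c q s1 s2)^2 ≤ M^2/2 + 3*M := by
    rw [hflat s1 s2 t1 t2 hs ht]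
    have := sum_beta_sq_le hc ht
    have hf2ge : 1 ≤ f t2 := alpha_diag_ge_one hc t2
    nlinarith [this, ht1le, ht2le, hf1ge, hf2ge]
  -- arithmetic
  have hρ1 : ρ ≤ 1 := hρ.2
  have hMsq : (0:ℝ) < M^2 := by positivity
  rw [ge_iff_le, ← sub_nonneg]
  have key : (1 - ρ) * (M^2 - 2 * (∑ q, (betaW m c q s1 s2)^2) + 22*M + 96) ≥ 0 := by
    apply mul_nonneg (by linarith)
    nlinarith [hSb]
  have expand : 1 - ((1 - ρ) / (2 * M^2)) * ∑ q, (betaW m c q s1 s2)^2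
      - (3/4 + ρ/4 - (1 - ρ) * (11 / (2 * M) + 24 / M^2))
      = ((1 - ρ) * (M^2 - 2 * (∑ q, (betaW m c q s1 s2)^2) + 22*M + 96)) / (4 * M^2) := by
    field_simp
    ring
  rw [expand]
  positivity
end

section
/- Let m ≥ 3 and let c be a WOMNI weight tensor that induces flat correlation. Then min_{q ∈ {1,…,m}} α(q,q) ≥ (m−8)/2 and max_{q ∈ {1,…,m}} α(q,q) ≤ (m+10)/2. -/
open Finset

set_option maxHeartbeats 1000000

lemma womni_alphaW_off (m : ℕ) (c : Fin m → Fin m → Fin m → ℝ) (hc : IsWOMNI m c)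
    {k q : Fin m} (h : q ≠ k) : alphaW m c k q = c q q k := by
  obtain ⟨h1, h2, h3, h4, h5⟩ := hc
  rw [alphaW, Finset.sum_eq_single q]
  · exact h1 q k q
  · intro ℓ _ hℓ
    exact h2 q k ℓ h (Ne.symm hℓ)
  · intro hq; exact absurd (Finset.mem_univ q) hq

lemma womni_off_mem (m : ℕ) (c : Fin m → Fin m → Fin m → ℝ) (hc : IsWOMNI m c)
    {i j : Fin m} (h : i ≠ j) : 0 ≤ c i i j ∧ c i i j ≤ 1 := by
  obtain ⟨hle, hle'⟩ := (hc.2.2.2.2 i j h).1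
  exact ⟨hle, hle'⟩

lemma womni_diag_ge_one (m : ℕ) (c : Fin m → Fin m → Fin m → ℝ) (hc : IsWOMNI m c)
    (q : Fin m) : 1 ≤ alphaW m c q q := by
  rw [alphaW]
  have : c q q q = 1 := hc.2.2.1 q
  calc (1:ℝ) = c q q q := this.symm
    _ ≤ ∑ ℓ, c q q ℓ := by
        apply Finset.single_le_sum (f := fun ℓ => c q q ℓ) _ (Finset.mem_univ q)
        intro ℓ _
        by_cases hq : q = ℓ
        · subst hq; show 0 ≤ c _ _ _; rw [this]; norm_num
        · exact (womni_off_mem m c hc hq).1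

lemma womni_sum_diag (m : ℕ) (c : Fin m → Fin m → Fin m → ℝ) (hc : IsWOMNI m c) :
    ∑ q, alphaW m c q q = (m : ℝ) * ((m : ℝ) + 1) / 2 := by
  have key : ∀ q ℓ : Fin m, c q q ℓ + c ℓ ℓ q = (if q = ℓ then (1:ℝ) else 0) + 1 := by
    intro q ℓ
    by_cases h : q = ℓ
    · subst h; rw [hc.2.2.1 q]; norm_num
    · have h5 := (hc.2.2.2.2 q ℓ h).2
      have : c ℓ ℓ q = c ℓ q ℓ := hc.1 ℓ ℓ q ▸ rfl
      rw [if_neg h]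
      have hsym : c ℓ ℓ q = c ℓ q ℓ := hc.1 ℓ ℓ q
      linarith [hsym, h5]
  have h2 : ∑ q, ∑ ℓ, (c q q ℓ + c ℓ ℓ q) = (m : ℝ) + (m:ℝ) * (m:ℝ) := by
    have : ∀ q : Fin m, ∑ ℓ, (c q q ℓ + c ℓ ℓ q) = 1 + (m:ℝ) := by
      intro q
      rw [Finset.sum_congr rfl (fun ℓ _ => key q ℓ), Finset.sum_add_distrib]
      simp [Finset.sum_ite_eq]
    rw [Finset.sum_congr rfl (fun q _ => this q)]
    simp [Finset.sum_const, Finset.card_univ]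
    try ring
  have h3 : ∑ q : Fin m, ∑ ℓ, c ℓ ℓ q = ∑ q : Fin m, ∑ ℓ, c q q ℓ := Finset.sum_comm
  have h4 : ∑ q : Fin m, ∑ ℓ, (c q q ℓ + c ℓ ℓ q)
      = ∑ q : Fin m, ∑ ℓ, c q q ℓ + ∑ q : Fin m, ∑ ℓ, c ℓ ℓ q := by
    rw [← Finset.sum_add_distrib]
    congr 1; ext q; rw [Finset.sum_add_distrib]
  have : (2:ℝ) * ∑ q, alphaW m c q q = (m:ℝ) + (m:ℝ)*(m:ℝ) := by
    have : ∑ q, alphaW m c q q = ∑ q : Fin m, ∑ ℓ, c q q ℓ := rfl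
    rw [this]; linarith [h2, h3, h4]
  linarith

lemma womni_pair (m : ℕ) (hm : 3 ≤ m) (c : Fin m → Fin m → Fin m → ℝ) (hc : IsWOMNI m c)
    {i j : Fin m} (hij : i ≠ j) :
    (alphaW m c i i - c i i j)^2 + (1 - c i i j - alphaW m c j j)^2
        ≤ ∑ q, (betaW m c q i j)^2 ∧
    ∑ q, (betaW m c q i j)^2
        ≤ (alphaW m c i i - c i i j)^2 + (1 - c i i j - alphaW m c j j)^2 + ((m:ℝ) - 2) := by
  have hbi : betaW m c i i j = alphaW m c i i - c i i j := by
    rw [betaW, womni_alphaW_off m c hc hij]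
  have hbj : betaW m c j i j = 1 - c i i j - alphaW m c j j := by
    rw [betaW, womni_alphaW_off m c hc (Ne.symm hij)]
    have h5 := (hc.2.2.2.2 i j hij).2
    have hsym : c j j i = c j i j := hc.1 j j i
    rw [hsym]
    linarith [h5]
  have hsplit : ∑ q, (betaW m c q i j)^2
      = ∑ q ∈ univ \ {i, j}, (betaW m c q i j)^2
        + ((alphaW m c i i - c i i j)^2 + (1 - c i i j - alphaW m c j j)^2) := by
    have e := Finset.sum_sdiff (f := fun q => (betaW m c q i j)^2) (Finset.subset_univ {i, j})
    rw [Finset.sum_pair hij] at e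
    rw [← e, hbi, hbj]
  have hmidnn : (0:ℝ) ≤ ∑ q ∈ univ \ {i, j}, (betaW m c q i j)^2 :=
    Finset.sum_nonneg fun q _ => sq_nonneg _
  have hmidub : ∑ q ∈ univ \ {i, j}, (betaW m c q i j)^2 ≤ (m:ℝ) - 2 := by
    have hcard : (univ \ ({i, j} : Finset (Fin m))).card = m - 2 := by
      rw [Finset.card_sdiff_of_subset (Finset.subset_univ _), Finset.card_univ, Fintype.card_fin,
        Finset.card_pair hij]
    have hbound : ∀ q ∈ univ \ ({i, j} : Finset (Fin m)), (betaW m c q i j)^2 ≤ 1 := by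
      intro q hq
      simp only [Finset.mem_sdiff, Finset.mem_insert, Finset.mem_singleton] at hq
      push_neg at hq
      obtain ⟨-, hqi, hqj⟩ := hq
      have e1 : alphaW m c i q = c q q i := womni_alphaW_off m c hc hqi
      have e2 : alphaW m c j q = c q q j := womni_alphaW_off m c hc hqj
      have b1 := womni_off_mem m c hc hqi
      have b2 := womni_off_mem m c hc hqj
      rw [betaW, e1, e2]
      nlinarith [b1.1, b1.2, b2.1, b2.2]
    calc ∑ q ∈ univ \ ({i, j} : Finset (Fin m)), (betaW m c q i j)^2
        ≤ (univ \ ({i, j} : Finset (Fin m))).card • (1:ℝ) :=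
          Finset.sum_le_card_nsmul _ _ _ hbound
      _ = ((m - 2 : ℕ) : ℝ) := by rw [hcard]; simp
      _ ≤ (m:ℝ) - 2 := by
          rw [Nat.cast_sub (by omega)]; norm_num
  constructor
  · rw [hsplit]; linarith
  · rw [hsplit]; linarith

theorem stmt_7 (m : ℕ) (hm : 3 ≤ m) (c : Fin m → Fin m → Fin m → ℝ)
    (hc : IsWOMNI m c) (hflat : InducesFlat m c)
    (M L : ℝ) (hM : IsGreatest (Set.range fun q : Fin m => alphaW m c q q) M)
    (hL : IsLeast (Set.range fun q : Fin m => alphaW m c q q) L) :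
    L ≥ ((m : ℝ) - 8) / 2 ∧ M ≤ ((m : ℝ) + 10) / 2 := by
  have hm3 : (3:ℝ) ≤ (m:ℝ) := by exact_mod_cast hm
  set a : Fin m → ℝ := fun q => alphaW m c q q with ha
  obtain ⟨s, hs⟩ := hM.1
  obtain ⟨t, ht⟩ := hL.1
  have haM : ∀ q, a q ≤ M := fun q => hM.2 ⟨q, rfl⟩
  have haL : ∀ q, L ≤ a q := fun q => hL.2 ⟨q, rfl⟩
  have ha1 : ∀ q, 1 ≤ a q := fun q => womni_diag_ge_one m c hc q
  have hsum : ∑ q, a q = (m:ℝ) * ((m:ℝ)+1)/2 := womni_sum_diag m c hc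
  have hL1 : (1:ℝ) ≤ L := ht ▸ ha1 t
  have hLM : L ≤ M := le_trans (ht ▸ haM t : L ≤ M) le_rfl
  by_cases hML : M = L
  · -- all values equal, M = (m+1)/2
    have hall : ∀ q, a q = M := fun q => le_antisymm (haM q) (hML ▸ haL q)
    have hMsum : (m:ℝ) * M = (m:ℝ) * ((m:ℝ)+1)/2 := by
      rw [← hsum, Finset.sum_congr rfl (fun q _ => hall q), Finset.sum_const,
        Finset.card_univ, Fintype.card_fin, nsmul_eq_mul]
    have hMval : M = ((m:ℝ)+1)/2 := by
      have hmne : (m:ℝ) ≠ 0 := by positivity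
      have h' : (m:ℝ) * M = (m:ℝ) * (((m:ℝ)+1)/2) := by rw [hMsum]; ring
      exact mul_left_cancel₀ hmne h'
    constructor
    · rw [← hML] at *; linarith
    · linarith
  · have hst : s ≠ t := by
      intro h; apply hML; rw [← hs, ← ht, h]
    have hs' : a s = M := hs
    have ht' : a t = L := ht
    -- pair (s,t)
    obtain ⟨pst1, pst2⟩ := womni_pair m hm c hc hst
    have hx1 := womni_off_mem m c hc hst
    rw [show alphaW m c s s = a s from rfl, show alphaW m c t t = a t from rfl, hs', ht']
      at pst1 pst2
    set x1 := c s s t with hx1def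
    -- v = argmin over erase t
    obtain ⟨v, hvmem, hvmin⟩ := Finset.exists_min_image (univ.erase t) a
      ⟨s, Finset.mem_erase.2 ⟨hst, Finset.mem_univ s⟩⟩
    have htv : t ≠ v := (Finset.ne_of_mem_erase hvmem).symm
    obtain ⟨ptv1, ptv2⟩ := womni_pair m hm c hc htv
    have hx2 := womni_off_mem m c hc htv
    rw [show alphaW m c t t = a t from rfl, show alphaW m c v v = a v from rfl, ht'] at ptv1 ptv2
    set x2 := c t t v with hx2def
    have hK2 : ∑ q, (betaW m c q t v)^2 = ∑ q, (betaW m c q s t)^2 := hflat t v s t htv hst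
    -- bound on a v
    have hcardt : (univ.erase t).card = m - 1 := by
      rw [Finset.card_erase_of_mem (Finset.mem_univ t), Finset.card_univ, Fintype.card_fin]
    have hav_le : ((m:ℝ) - 1) * a v ≤ (m:ℝ)*((m:ℝ)+1)/2 - L := by
      have h1 : (univ.erase t).card • a v ≤ ∑ q ∈ univ.erase t, a q :=
        Finset.card_nsmul_le_sum _ _ _ (fun q hq => hvmin q hq)
      rw [hcardt, nsmul_eq_mul, Nat.cast_sub (by omega), Nat.cast_one] at h1
      have h2 : ∑ q ∈ univ.erase t, a q = (m:ℝ)*((m:ℝ)+1)/2 - L := by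
        rw [Finset.sum_erase_eq_sub (Finset.mem_univ t), hsum, ht']
      linarith [h1, h2.le, h2.ge]
    have havL : L ≤ a v := haL v
    have key1 : (M - x1)^2 + (1 - x1 - L)^2 ≤ (L - x2)^2 + (1 - x2 - a v)^2 + ((m:ℝ) - 2) := by
      linarith [pst1, ptv2, hK2.le, hK2.ge]
    have step2 : (M - 1/2)^2 - (M - 1/2) ≤ (a v - 1/2)^2 + (a v - 1/2) + (m:ℝ) - 5/2 := by
      have PA : (0:ℝ) ≤ (M - L) * (2 - 2*x1) :=
        mul_nonneg (by linarith) (by linarith [hx1.2])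
      have PB : (0:ℝ) ≤ (a v - L) * (2 - 2*x2) :=
        mul_nonneg (by linarith) (by linarith [hx2.2])
      have PC : (0:ℝ) ≤ x2 * (1 - x2) := mul_nonneg hx2.1 (by linarith [hx2.2])
      have PS : (0:ℝ) ≤ (1 - 2*x1)^2 := sq_nonneg _
      linarith [key1, PA, PB, PC, PS, hL1]
    have hav2 : a v ≤ ((m:ℝ)+2)/2 := by
      have hmpos : (0:ℝ) < (m:ℝ) - 1 := by linarith
      have h' : ((m:ℝ)-1) * a v ≤ ((m:ℝ)-1) * (((m:ℝ)+2)/2) := by linarith [hav_le, hL1]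
      exact le_of_mul_le_mul_left h' hmpos
    have goal1 : M ≤ ((m:ℝ)+10)/2 := by
      by_contra hgt
      push_neg at hgt
      have E1 : (0:ℝ) < (M - ((m:ℝ)+10)/2) * (M + ((m:ℝ)+10)/2 - 2) := by
        apply mul_pos (by linarith)
        linarith
      have E2 : (0:ℝ) ≤ (((m:ℝ)+2)/2 - a v) * (((m:ℝ)+2)/2 + a v) := by
        apply mul_nonneg (by linarith [hav2])
        linarith [ha1 v, hm3]
      linarith [step2, E1, E2, hm3]
    refine ⟨?_, goal1⟩
    -- lower bound on L
    rcases le_or_gt (m:ℝ) 10 with hsmall | hbig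
    · linarith
    · have hm11 : (11:ℝ) ≤ (m:ℝ) := by
        have : (10:ℕ) < m := by exact_mod_cast hbig
        exact_mod_cast this
      -- u = argmax over erase s
      obtain ⟨u, humem, humax⟩ := Finset.exists_max_image (univ.erase s) a
        ⟨t, Finset.mem_erase.2 ⟨Ne.symm hst, Finset.mem_univ t⟩⟩
      have hsu : s ≠ u := (Finset.ne_of_mem_erase humem).symm
      obtain ⟨psu1, psu2⟩ := womni_pair m hm c hc hsu
      rw [show alphaW m c s s = a s from rfl, show alphaW m c u u = a u from rfl, hs']
        at psu1 psu2
      set x3 := c s s u with hx3def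
      have hx3 := womni_off_mem m c hc hsu
      have hK3 : ∑ q, (betaW m c q s u)^2 = ∑ q, (betaW m c q s t)^2 := hflat s u s t hsu hst
      have hcards : (univ.erase s).card = m - 1 := by
        rw [Finset.card_erase_of_mem (Finset.mem_univ s), Finset.card_univ, Fintype.card_fin]
      have hau_ge : (m:ℝ)*((m:ℝ)+1)/2 - M ≤ ((m:ℝ) - 1) * a u := by
        have h1 : ∑ q ∈ univ.erase s, a q ≤ (univ.erase s).card • a u :=
          Finset.sum_le_card_nsmul _ _ _ (fun q hq => humax q hq)
        rw [hcards, nsmul_eq_mul, Nat.cast_sub (by omega), Nat.cast_one] at h1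
        have h2 : ∑ q ∈ univ.erase s, a q = (m:ℝ)*((m:ℝ)+1)/2 - M := by
          rw [Finset.sum_erase_eq_sub (Finset.mem_univ s), hsum, hs']
        linarith [h1, h2.le, h2.ge]
      have hau_half : (m:ℝ)/2 ≤ a u := by
        have hmpos : (0:ℝ) < (m:ℝ) - 1 := by linarith
        have h' : ((m:ℝ)-1) * ((m:ℝ)/2) ≤ ((m:ℝ)-1) * a u := by
          linarith [hau_ge, goal1, hm11]
        exact le_of_mul_le_mul_left h' hmpos
      have hauM : a u ≤ M := haM u
      have key2 : (M - x3)^2 + (1 - x3 - a u)^2 ≤ (M - x1)^2 + (1 - x1 - L)^2 + ((m:ℝ) - 2) := by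
        linarith [psu1, pst2, hK3.le, hK3.ge]
      have step3 : (a u - 1/2)^2 + (a u - 1/2)
          ≤ (L - 1/2)^2 - (L - 1/2) + 2*(M - 1/2) + (m:ℝ) - 3/2 := by
        have QA : (0:ℝ) ≤ (M - a u) * (2 - 2*x3) :=
          mul_nonneg (by linarith [hauM]) (by linarith [hx3.2])
        have QB : (0:ℝ) ≤ (M - L) * (2*x1) :=
          mul_nonneg (by linarith) (by linarith [hx1.1])
        have QC : (0:ℝ) ≤ x1 * (1 - x1) := mul_nonneg hx1.1 (by linarith [hx1.2])
        have QS : (0:ℝ) ≤ (1 - 2*x3)^2 := sq_nonneg _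
        linarith [key2, QA, QB, QC, QS]
      by_contra hcon
      push_neg at hcon
      have hcon' : L < ((m:ℝ) - 8)/2 := hcon
      have F1 : (0:ℝ) < (((m:ℝ) - 8)/2 - L) * (L + ((m:ℝ) - 8)/2 - 2) := by
        apply mul_pos (by linarith)
        linarith [hL1, hm11]
      have F2 : (0:ℝ) ≤ (a u - (m:ℝ)/2) * (a u + (m:ℝ)/2) := by
        apply mul_nonneg (by linarith [hau_half])
        linarith [hau_half, hm11]
      linarith [step3, F1, F2, goal1, hm11]
end

section
/- Let m ≥ 2 and let c be a WOMNI weight tensor that induces flat correlation, with common value S = ∑_{q=1}^m β_q(s1,s2)² (the same for all pairs s1 ≠ s2). Then S ≥ m²/2; equivalently, for every ρ ∈ [−1,1] the flat correlation satisfies 𝔯(s1,s2) ≤ 3/4 + ρ/4 for all s1 ≠ s2. Thus the classical OMNI construction, which attains 𝔯(s1,s2) = 3/4 + ρ/4, induces the maximum possible flat correlation among WOMNI weight tensors. -/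
open Finset

/-- Centered weight `b i j = c i i j − 1/2` (0 on the diagonal). -/
noncomputable def bWa (m : ℕ) (c : Fin m → Fin m → Fin m → ℝ) (i j : Fin m) : ℝ :=
  if i = j then 0 else c i i j - 1/2

/-- Row sums of the centered weights. -/
noncomputable def rWa (m : ℕ) (c : Fin m → Fin m → Fin m → ℝ) (i : Fin m) : ℝ :=
  ∑ j, bWa m c i j

lemma sum_sq_pairdiff (n : ℕ) (a : Fin n → ℝ) :
    ∑ i, ∑ j, (a i - a j)^2 = 2*n*(∑ i, (a i)^2) - 2*(∑ i, a i)^2 := by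
  have h : ∀ i : Fin n, ∑ j, (a i - a j)^2
      = n * (a i)^2 + (∑ j, (a j)^2) - 2 * (a i * ∑ j, a j) := by
    intro i
    have h2 : ∀ j : Fin n, (a i - a j)^2
        = (a i)^2 + ((a j)^2 - 2 * (a i * a j)) := fun j => by ring
    simp_rw [h2, Finset.sum_add_distrib, Finset.sum_sub_distrib, Finset.sum_const,
      ← Finset.mul_sum, card_univ, Fintype.card_fin, nsmul_eq_mul]
    ring
  simp_rw [h, Finset.sum_sub_distrib, Finset.sum_add_distrib, Finset.sum_const,
    ← Finset.mul_sum, card_univ, Fintype.card_fin, nsmul_eq_mul]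
  rw [← Finset.sum_mul]; ring

section aux

variable {m : ℕ} {c : Fin m → Fin m → Fin m → ℝ} (hc : IsWOMNI m c)

include hc

lemma bWa_anti (i j : Fin m) : bWa m c j i = - bWa m c i j := by
  by_cases h : i = j
  · subst h; simp [bWa]
  · have h2 := (hc.2.2.2.2 i j h).2
    have h3 : c j i j = c j j i := hc.1 j i j
    simp only [bWa, if_neg (Ne.symm h), if_neg h]
    linarith

lemma col_sum (q : Fin m) : ∑ k, bWa m c k q = - rWa m c q := by
  rw [rWa, ← Finset.sum_neg_distrib]
  exact Finset.sum_congr rfl fun k _ => bWa_anti hc q k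

lemma sum_rWa : ∑ i, rWa m c i = 0 := by
  have h1 : ∑ i, rWa m c i = ∑ j, ∑ i, bWa m c i j := by
    rw [Finset.sum_comm]; rfl
  have h2 : ∑ j, ∑ i, bWa m c i j = - ∑ j, rWa m c j := by
    rw [← Finset.sum_neg_distrib]
    exact Finset.sum_congr rfl fun j _ => col_sum hc j
  have := h1.trans h2
  linarith

lemma alphaW_ne (k q : Fin m) (hkq : k ≠ q) : alphaW m c k q = 1/2 - bWa m c k q := by
  rw [alphaW, Finset.sum_eq_single q]
  · have h1 := (hc.2.2.2.2 k q hkq).2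
    have h3 : c q k q = c q q k := hc.1 q k q
    simp only [bWa, if_neg hkq]
    linarith
  · intro ℓ _ hℓ
    exact hc.2.1 q k ℓ (Ne.symm hkq) (Ne.symm hℓ)
  · intro h; exact absurd (Finset.mem_univ q) h

lemma alphaW_diag (q : Fin m) : alphaW m c q q = ((m:ℝ)+1)/2 + rWa m c q := by
  have key : ∀ ℓ : Fin m, c q q ℓ
      = 1/2 + bWa m c q ℓ + (if ℓ = q then (1:ℝ)/2 else 0) := by
    intro ℓ
    by_cases h : ℓ = q
    · subst h
      simp only [bWa, if_pos rfl, hc.2.2.1]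
      norm_num
    · simp only [bWa, if_neg (Ne.symm h), if_neg h]
      ring
  rw [alphaW, Finset.sum_congr rfl fun ℓ _ => key ℓ]
  rw [Finset.sum_add_distrib, Finset.sum_add_distrib, Finset.sum_const,
    Finset.sum_ite_eq' univ q (fun _ => (1:ℝ)/2), if_pos (Finset.mem_univ q),
    card_univ, Fintype.card_fin, nsmul_eq_mul, ← rWa]
  ring

lemma col_sum_alpha (q : Fin m) : ∑ k, alphaW m c k q = (m:ℝ) + 2 * rWa m c q := by
  have key : ∀ k : Fin m, alphaW m c k q
      = (1/2 - bWa m c k q) + (if k = q then (m:ℝ)/2 + rWa m c q else 0) := by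
    intro k
    by_cases h : k = q
    · subst h
      rw [alphaW_diag hc, if_pos rfl]
      simp [bWa]
      ring
    · rw [alphaW_ne hc k q h, if_neg h]; ring
  rw [Finset.sum_congr rfl fun k _ => key k, Finset.sum_add_distrib,
    Finset.sum_sub_distrib, Finset.sum_const,
    Finset.sum_ite_eq' univ q (fun _ => (m:ℝ)/2 + rWa m c q), if_pos (Finset.mem_univ q),
    col_sum hc, card_univ, Fintype.card_fin, nsmul_eq_mul]
  ring

lemma col_sum_alpha_sq (q : Fin m) : ∑ k, (alphaW m c k q)^2
    = (m:ℝ)/4 + rWa m c q + (∑ k, (bWa m c k q)^2)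
      + (((m:ℝ)+1)/2 + rWa m c q)^2 - 1/4 := by
  have key : ∀ k : Fin m, (alphaW m c k q)^2
      = (1/4 - bWa m c k q + (bWa m c k q)^2)
        + (if k = q then (((m:ℝ)+1)/2 + rWa m c q)^2 - (1:ℝ)/4 else 0) := by
    intro k
    by_cases h : k = q
    · subst h
      rw [alphaW_diag hc, if_pos rfl]
      simp [bWa]
    · rw [alphaW_ne hc k q h, if_neg h]; ring
  rw [Finset.sum_congr rfl fun k _ => key k, Finset.sum_add_distrib,
    Finset.sum_add_distrib, Finset.sum_sub_distrib, Finset.sum_const,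
    Finset.sum_ite_eq' univ q (fun _ => (((m:ℝ)+1)/2 + rWa m c q)^2 - (1:ℝ)/4),
    if_pos (Finset.mem_univ q), col_sum hc, card_univ, Fintype.card_fin, nsmul_eq_mul]
  ring

end aux

theorem stmt_10 (m : ℕ) (hm : 2 ≤ m) (c : Fin m → Fin m → Fin m → ℝ)
    (hc : IsWOMNI m c) (S : ℝ)
    (hS : ∀ s1 s2 : Fin m, s1 ≠ s2 → ∑ q, (betaW m c q s1 s2)^2 = S) :
    S ≥ (m : ℝ)^2 / 2 ∧
    ∀ ρ ∈ Set.Icc (-1 : ℝ) 1, ∀ s1 s2 : Fin m, s1 ≠ s2 →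
      1 - ((1 - ρ) / (2 * (m : ℝ)^2)) * ∑ q, (betaW m c q s1 s2)^2 ≤ 3/4 + ρ/4 := by
  have hm' : (2:ℝ) ≤ (m:ℝ) := by exact_mod_cast hm
  set R : ℝ := ∑ i, (rWa m c i)^2 with hR
  set B2 : ℝ := ∑ q, ∑ k, (bWa m c k q)^2 with hB2
  -- double sum of S over all ordered pairs, two ways
  have way1 : ∑ i : Fin m, ∑ j : Fin m, ∑ q, (betaW m c q i j)^2
      = ((m:ℝ)^2 - (m:ℝ)) * S := by
    have h1 : ∀ i j : Fin m, ∑ q, (betaW m c q i j)^2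
        = S - (if i = j then S else 0) := by
      intro i j
      by_cases h : i = j
      · subst h
        simp [betaW]
      · rw [hS i j h, if_neg h]; ring
    simp_rw [h1, Finset.sum_sub_distrib, Finset.sum_const,
      Finset.sum_ite_eq univ, if_pos (Finset.mem_univ _), Finset.sum_const,
      card_univ, Fintype.card_fin, nsmul_eq_mul]
    ring
  have way2 : ∑ i : Fin m, ∑ j : Fin m, ∑ q, (betaW m c q i j)^2
      = (m:ℝ)^3 * ((m:ℝ)-1) / 2 + (2*(m:ℝ) - 8) * R + 2*(m:ℝ)*B2 := by
    have hswap : ∑ i : Fin m, ∑ j : Fin m, ∑ q, (betaW m c q i j)^2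
        = ∑ q : Fin m, ∑ i : Fin m, ∑ j : Fin m, (alphaW m c i q - alphaW m c j q)^2 := by
      calc ∑ i : Fin m, ∑ j : Fin m, ∑ q, (betaW m c q i j)^2
          = ∑ i : Fin m, ∑ q : Fin m, ∑ j : Fin m, (betaW m c q i j)^2 :=
            Finset.sum_congr rfl fun i _ => Finset.sum_comm
        _ = ∑ q : Fin m, ∑ i : Fin m, ∑ j : Fin m, (betaW m c q i j)^2 :=
            Finset.sum_comm
        _ = ∑ q : Fin m, ∑ i : Fin m, ∑ j : Fin m, (alphaW m c i q - alphaW m c j q)^2 := rfl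
    rw [hswap]
    have hq : ∀ q : Fin m, ∑ i : Fin m, ∑ j : Fin m, (alphaW m c i q - alphaW m c j q)^2
        = (m:ℝ)^2*((m:ℝ)-1)/2 + (2*(m:ℝ)^2 - 4*(m:ℝ)) * rWa m c q
          + (2*(m:ℝ) - 8) * (rWa m c q)^2 + 2*(m:ℝ) * ∑ k, (bWa m c k q)^2 := by
      intro q
      rw [sum_sq_pairdiff m (fun k => alphaW m c k q), col_sum_alpha hc q,
        col_sum_alpha_sq hc q]
      ring
    rw [Finset.sum_congr rfl fun q _ => hq q]
    rw [Finset.sum_add_distrib, Finset.sum_add_distrib, Finset.sum_add_distrib,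
      Finset.sum_const, ← Finset.mul_sum, ← Finset.mul_sum, ← Finset.mul_sum,
      sum_rWa hc, card_univ, Fintype.card_fin, nsmul_eq_mul, ← hR, ← hB2]
    ring
  have key : ((m:ℝ)^2 - (m:ℝ)) * S
      = (m:ℝ)^3 * ((m:ℝ)-1) / 2 + (2*(m:ℝ) - 8) * R + 2*(m:ℝ)*B2 := by
    rw [← way1, way2]
  -- Cauchy–Schwarz : R ≤ (m-1) * B2
  have hCS : R ≤ ((m:ℝ) - 1) * B2 := by
    have hB2' : B2 = ∑ i, ∑ j, (bWa m c i j)^2 := by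
      rw [hB2, Finset.sum_comm]
    rw [hR, hB2', Finset.mul_sum]
    refine Finset.sum_le_sum fun i _ => ?_
    have h0 : rWa m c i = ∑ j ∈ univ.erase i, bWa m c i j := by
      rw [rWa, Finset.sum_erase univ (by simp [bWa])]
    have hcs := sq_sum_le_card_mul_sum_sq (s := univ.erase i)
      (f := fun j => bWa m c i j)
    have hcard : (#(univ.erase i) : ℝ) = (m:ℝ) - 1 := by
      rw [Finset.card_erase_of_mem (Finset.mem_univ i), card_univ, Fintype.card_fin]
      have : (1:ℕ) ≤ m := le_trans one_le_two hm
      push_cast [Nat.cast_sub this]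
      ring
    have hsub : ∑ j ∈ univ.erase i, (bWa m c i j)^2 ≤ ∑ j, (bWa m c i j)^2 :=
      Finset.sum_le_sum_of_subset_of_nonneg (Finset.erase_subset _ _)
        (fun j _ _ => sq_nonneg _)
    calc (rWa m c i)^2 = (∑ j ∈ univ.erase i, bWa m c i j)^2 := by rw [h0]
      _ ≤ (#(univ.erase i) : ℝ) * ∑ j ∈ univ.erase i, (bWa m c i j)^2 := by
          exact_mod_cast hcs
      _ = ((m:ℝ) - 1) * ∑ j ∈ univ.erase i, (bWa m c i j)^2 := by rw [hcard]
      _ ≤ ((m:ℝ) - 1) * ∑ j, (bWa m c i j)^2 := by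
          apply mul_le_mul_of_nonneg_left hsub; linarith
  have hR0 : 0 ≤ R := Finset.sum_nonneg fun i _ => sq_nonneg _
  have hB0 : 0 ≤ B2 := Finset.sum_nonneg fun q _ =>
    Finset.sum_nonneg fun k _ => sq_nonneg _
  -- nonnegativity of the excess
  have hX : 0 ≤ (2*(m:ℝ) - 8) * R + 2*(m:ℝ)*B2 := by
    nlinarith [sq_nonneg ((m:ℝ) - 2), mul_nonneg (sq_nonneg ((m:ℝ) - 2)) hR0,
      mul_nonneg (by linarith : (0:ℝ) ≤ (m:ℝ)) (by linarith [hCS] : (0:ℝ) ≤ ((m:ℝ)-1)*B2 - R)]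
  have hSge : S ≥ (m:ℝ)^2 / 2 := by
    nlinarith [key, hX, mul_pos (by linarith : (0:ℝ) < (m:ℝ))
      (by linarith : (0:ℝ) < (m:ℝ) - 1)]
  refine ⟨hSge, ?_⟩
  intro ρ hρ s1 s2 h12
  rw [hS s1 s2 h12]
  have hm2 : (0:ℝ) < (m:ℝ)^2 := by positivity
  have h1ρ : 0 ≤ 1 - ρ := by linarith [hρ.2]
  have hfrac : (1 - ρ) / (2 * (m:ℝ)^2) * ((m:ℝ)^2/2) = (1 - ρ)/4 := by
    field_simp
    ring
  have : (1 - ρ)/4 ≤ (1 - ρ) / (2 * (m:ℝ)^2) * S := by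
    rw [← hfrac]
    apply mul_le_mul_of_nonneg_left hSge
    positivity
  linarith
end

section
/- Let m = 3 and let c be any WOMNI weight tensor that induces flat correlation, with common value S = ∑_{q=1}^3 β_q(s1,s2)² (the same for all three pairs s1 ≠ s2). Then S ≤ 6; equivalently, for every ρ ∈ [−1,1] the flat correlation satisfies 𝔯(s1,s2) ≥ 2/3 + ρ/3. Hence the value 2/3 + ρ/3 attained by 𝔐^W_{3−} and 𝔐^W_{3+} is the minimum flat correlation among all WOMNI tensors for m = 3. -/
open Finset

private lemma aux2_stmt14 (S ρ : ℝ) (hS6 : S ≤ 6) (hρ2 : ρ ≤ 1) :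
    1 - ((1 - ρ) / (2 * (3 : ℝ)^2)) * S ≥ 2/3 + ρ/3 := by
  nlinarith [mul_nonneg (sub_nonneg.2 hρ2) (sub_nonneg.2 hS6)]

private lemma aux_stmt14 (x y z S : ℝ) (hx0:0≤x)(hx1:x≤1)(hy0:0≤y)(hy1:y≤1)(hz0:0≤z)(hz1:z≤1)
    (e1 : (1+y)^2+(1+z)^2+(z-y)^2 = S)
    (e2 : (1+x)^2+(2-z)^2+(1-x-z)^2 = S)
    (e3 : (2-x)^2+(2-y)^2+(x-y)^2 = S) : S ≤ 6 := by
  nlinarith [mul_nonneg hx0 (sub_nonneg.2 hx1), mul_nonneg hy0 (sub_nonneg.2 hy1),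
    mul_nonneg hz0 (sub_nonneg.2 hz1), mul_nonneg hx0 hy0,
    mul_nonneg (sub_nonneg.2 hy1) (sub_nonneg.2 hz1),
    mul_nonneg hz0 (sub_nonneg.2 hx1)]

set_option maxHeartbeats 1600000 in
theorem stmt_14 (c : Fin 3 → Fin 3 → Fin 3 → ℝ) (hc : IsWOMNI 3 c) (S : ℝ)
    (hS : ∀ s1 s2 : Fin 3, s1 ≠ s2 → ∑ q, (betaW 3 c q s1 s2)^2 = S) :
    S ≤ 6 ∧
    ∀ ρ ∈ Set.Icc (-1 : ℝ) 1, ∀ s1 s2 : Fin 3, s1 ≠ s2 →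
      1 - ((1 - ρ) / (2 * (3 : ℝ)^2)) * ∑ q, (betaW 3 c q s1 s2)^2 ≥ 2/3 + ρ/3 := by
  obtain ⟨hsym, hzero, hdiag, hoff, hsum⟩ := hc
  -- entry values
  have e000 : c 0 0 0 = 1 := hdiag 0
  have e111 : c 1 1 1 = 1 := hdiag 1
  have e222 : c 2 2 2 = 1 := hdiag 2
  have e100 : c 1 0 0 = 0 := hoff 1 0 (by decide)
  have e200 : c 2 0 0 = 0 := hoff 2 0 (by decide)
  have e011 : c 0 1 1 = 0 := hoff 0 1 (by decide)
  have e211 : c 2 1 1 = 0 := hoff 2 1 (by decide)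
  have e022 : c 0 2 2 = 0 := hoff 0 2 (by decide)
  have e122 : c 1 2 2 = 0 := hoff 1 2 (by decide)
  have e012 : c 0 1 2 = 0 := hzero 0 1 2 (by decide) (by decide)
  have e021 : c 0 2 1 = 0 := hzero 0 2 1 (by decide) (by decide)
  have e102 : c 1 0 2 = 0 := hzero 1 0 2 (by decide) (by decide)
  have e120 : c 1 2 0 = 0 := hzero 1 2 0 (by decide) (by decide)
  have e201 : c 2 0 1 = 0 := hzero 2 0 1 (by decide) (by decide)
  have e210 : c 2 1 0 = 0 := hzero 2 1 0 (by decide) (by decide)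
  have hx := hsum 0 1 (by decide)
  have hy := hsum 0 2 (by decide)
  have hz := hsum 1 2 (by decide)
  obtain ⟨⟨hx0, hx1⟩, hxs⟩ := hx
  obtain ⟨⟨hy0, hy1⟩, hys⟩ := hy
  obtain ⟨⟨hz0, hz1⟩, hzs⟩ := hz
  have e101 : c 1 0 1 = 1 - c 0 0 1 := by linarith
  have e110 : c 1 1 0 = 1 - c 0 0 1 := by rw [hsym 1 1 0]; exact e101
  have e010 : c 0 1 0 = c 0 0 1 := hsym 0 1 0
  have e202 : c 2 0 2 = 1 - c 0 0 2 := by linarith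
  have e220 : c 2 2 0 = 1 - c 0 0 2 := by rw [hsym 2 2 0]; exact e202
  have e020 : c 0 2 0 = c 0 0 2 := hsym 0 2 0
  have e212 : c 2 1 2 = 1 - c 1 1 2 := by linarith
  have e221 : c 2 2 1 = 1 - c 1 1 2 := by rw [hsym 2 2 1]; exact e212
  have e121 : c 1 2 1 = c 1 1 2 := hsym 1 2 1
  have h01 := hS 0 1 (by decide)
  have h02 := hS 0 2 (by decide)
  have h12 := hS 1 2 (by decide)
  simp only [betaW, alphaW, Fin.sum_univ_three, e000, e111, e222, e100, e200, e011, e211,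
    e022, e122, e012, e021, e102, e120, e201, e210, e101, e110, e010, e202, e220, e020,
    e212, e221, e121] at h01 h02 h12
  have hS6 : S ≤ 6 :=
    aux_stmt14 (c 0 0 1) (c 0 0 2) (c 1 1 2) S hx0 hx1 hy0 hy1 hz0 hz1
      (by linear_combination h01) (by linear_combination h02) (by linear_combination h12)
  refine ⟨hS6, ?_⟩
  intro ρ hρ s1 s2 hne
  rw [hS s1 s2 hne]
  exact aux2_stmt14 S ρ hS6 hρ.2
end

section
/- Let m = 4, let a = (5 − √17)/2 and b = (√17 − 3)/2 (so that a, b ∈ [0,1] and a + b = 1), and let c be the WOMNI weight tensor determined by c(2,1,2) = 1, c(1,1,3) = 1, c(3,2,3) = 1 (with complementary weights 0), and c(i,i,4) = a, c(4,i,4) = b for i = 1,2,3. Then for every pair s1 ≠ s2 ∈ {1,…,4}, ∑_{q=1}^4 β_q(s1,s2)² = 42 − 8√17; hence for every ρ ∈ [−1,1] the induced correlation is flat with 𝔯(s1,s2) = (4√17 − 5)/16 + ((21 − 4√17)/16)·ρ, which for ρ < 1 is strictly smaller than the classical OMNI flat correlation 3/4 + ρ/4. -/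
open Finset

theorem stmt_15 (c : Fin 4 → Fin 4 → Fin 4 → ℝ) (hc : IsWOMNI 4 c)
    (a b : ℝ) (ha : a = (5 - Real.sqrt 17) / 2) (hb : b = (Real.sqrt 17 - 3) / 2)
    (hspec1 : c 1 0 1 = 1) (hspec2 : c 0 0 2 = 1) (hspec3 : c 2 1 2 = 1)
    (hspec4 : ∀ i : Fin 4, i ≠ 3 → c i i 3 = a ∧ c 3 i 3 = b) :
    ∀ s1 s2 : Fin 4, s1 ≠ s2 →
      (∑ q, (betaW 4 c q s1 s2)^2 = 42 - 8 * Real.sqrt 17) ∧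
      ∀ ρ ∈ Set.Icc (-1 : ℝ) 1,
        (1 - ((1 - ρ) / (2 * (4 : ℝ)^2)) * ∑ q, (betaW 4 c q s1 s2)^2
          = (4 * Real.sqrt 17 - 5) / 16 + ((21 - 4 * Real.sqrt 17) / 16) * ρ) ∧
        (ρ < 1 →
          1 - ((1 - ρ) / (2 * (4 : ℝ)^2)) * ∑ q, (betaW 4 c q s1 s2)^2
            < 3/4 + ρ/4) := by
  obtain ⟨hsym, hzero, hdiag, hoff, hcomp⟩ := hc
  have h001 : c 0 0 1 = 0 := by have h := (hcomp 0 1 (by decide)).2; rw [hspec1] at h; linarith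
  have h202 : c 2 0 2 = 0 := by have h := (hcomp 0 2 (by decide)).2; rw [hspec2] at h; linarith
  have h112 : c 1 1 2 = 0 := by have h := (hcomp 1 2 (by decide)).2; rw [hspec3] at h; linarith
  have A00 : alphaW 4 c 0 0 = 2 + a := by
    rw [alphaW, Fin.sum_univ_four, hdiag 0, h001, hspec2, (hspec4 0 (by decide)).1]; ring
  have A01 : alphaW 4 c 0 1 = 1 := by
    rw [alphaW, Fin.sum_univ_four, hoff 1 0 (by decide), hspec1,
      hzero 1 0 2 (by decide) (by decide), hzero 1 0 3 (by decide) (by decide)]; ring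
  have A02 : alphaW 4 c 0 2 = 0 := by
    rw [alphaW, Fin.sum_univ_four, hoff 2 0 (by decide), hzero 2 0 1 (by decide) (by decide),
      h202, hzero 2 0 3 (by decide) (by decide)]; ring
  have A03 : alphaW 4 c 0 3 = b := by
    rw [alphaW, Fin.sum_univ_four, hoff 3 0 (by decide), hzero 3 0 1 (by decide) (by decide),
      hzero 3 0 2 (by decide) (by decide), (hspec4 0 (by decide)).2]; ring
  have A10 : alphaW 4 c 1 0 = 0 := by
    rw [alphaW, Fin.sum_univ_four, hsym 0 1 0, h001, hoff 0 1 (by decide),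
      hzero 0 1 2 (by decide) (by decide), hzero 0 1 3 (by decide) (by decide)]; ring
  have A11 : alphaW 4 c 1 1 = 2 + a := by
    rw [alphaW, Fin.sum_univ_four, hsym 1 1 0, hspec1, hdiag 1, h112,
      (hspec4 1 (by decide)).1]; ring
  have A12 : alphaW 4 c 1 2 = 1 := by
    rw [alphaW, Fin.sum_univ_four, hzero 2 1 0 (by decide) (by decide), hoff 2 1 (by decide),
      hspec3, hzero 2 1 3 (by decide) (by decide)]; ring
  have A13 : alphaW 4 c 1 3 = b := by
    rw [alphaW, Fin.sum_univ_four, hzero 3 1 0 (by decide) (by decide), hoff 3 1 (by decide),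
      hzero 3 1 2 (by decide) (by decide), (hspec4 1 (by decide)).2]; ring
  have A20 : alphaW 4 c 2 0 = 1 := by
    rw [alphaW, Fin.sum_univ_four, hsym 0 2 0, hspec2, hzero 0 2 1 (by decide) (by decide),
      hoff 0 2 (by decide), hzero 0 2 3 (by decide) (by decide)]; ring
  have A21 : alphaW 4 c 2 1 = 0 := by
    rw [alphaW, Fin.sum_univ_four, hzero 1 2 0 (by decide) (by decide), hsym 1 2 1, h112,
      hoff 1 2 (by decide), hzero 1 2 3 (by decide) (by decide)]; ring
  have A22 : alphaW 4 c 2 2 = 2 + a := by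
    rw [alphaW, Fin.sum_univ_four, hsym 2 2 0, h202, hsym 2 2 1, hspec3, hdiag 2,
      (hspec4 2 (by decide)).1]; ring
  have A23 : alphaW 4 c 2 3 = b := by
    rw [alphaW, Fin.sum_univ_four, hzero 3 2 0 (by decide) (by decide),
      hzero 3 2 1 (by decide) (by decide), hoff 3 2 (by decide), (hspec4 2 (by decide)).2]; ring
  have A30 : alphaW 4 c 3 0 = a := by
    rw [alphaW, Fin.sum_univ_four, hsym 0 3 0, (hspec4 0 (by decide)).1,
      hzero 0 3 1 (by decide) (by decide), hzero 0 3 2 (by decide) (by decide),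
      hoff 0 3 (by decide)]; ring
  have A31 : alphaW 4 c 3 1 = a := by
    rw [alphaW, Fin.sum_univ_four, hzero 1 3 0 (by decide) (by decide), hsym 1 3 1,
      (hspec4 1 (by decide)).1, hzero 1 3 2 (by decide) (by decide), hoff 1 3 (by decide)]; ring
  have A32 : alphaW 4 c 3 2 = a := by
    rw [alphaW, Fin.sum_univ_four, hzero 2 3 0 (by decide) (by decide),
      hzero 2 3 1 (by decide) (by decide), hsym 2 3 2, (hspec4 2 (by decide)).1,
      hoff 2 3 (by decide)]; ring
  have A33 : alphaW 4 c 3 3 = 3 * b + 1 := by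
    rw [alphaW, Fin.sum_univ_four, hsym 3 3 0, (hspec4 0 (by decide)).2, hsym 3 3 1,
      (hspec4 1 (by decide)).2, hsym 3 3 2, (hspec4 2 (by decide)).2, hdiag 3]; ring
  have hs : Real.sqrt 17 * Real.sqrt 17 = 17 := Real.mul_self_sqrt (by norm_num)
  subst ha hb
  have hS : ∀ s1 s2 : Fin 4, s1 ≠ s2 →
      ∑ q, (betaW 4 c q s1 s2)^2 = 42 - 8 * Real.sqrt 17 := by
    intro s1 s2 hne
    fin_cases s1 <;> fin_cases s2 <;>
      first
        | exact absurd rfl hne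
        | (simp only [Fin.mk_zero, Fin.mk_one, show ((⟨2, by omega⟩ : Fin 4)) = 2 from rfl,
             show ((⟨3, by omega⟩ : Fin 4)) = 3 from rfl, Fin.sum_univ_four, betaW,
             A00, A01, A02, A03, A10, A11, A12, A13, A20, A21, A22, A23, A30, A31, A32, A33]
           first
             | linear_combination (1/2 : ℝ) * hs
             | linear_combination (3/2 : ℝ) * hs
             | linear_combination (-1/2 : ℝ) * hs
             | linear_combination (-3/2 : ℝ) * hs
             | nlinarith [hs])
  intro s1 s2 hne
  refine ⟨hS s1 s2 hne, ?_⟩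
  intro ρ hρ
  rw [hS s1 s2 hne]
  constructor
  · ring
  · intro hρ1
    have h17 : Real.sqrt 17 < 17 / 4 := by
      rw [show (17:ℝ)/4 = Real.sqrt ((17/4)^2) by rw [Real.sqrt_sq]; norm_num]
      exact Real.sqrt_lt_sqrt (by norm_num) (by norm_num)
    nlinarith [mul_pos (sub_pos.mpr hρ1) (sub_pos.mpr h17)]
end

section
/- Let m ≥ 3 and define g : ℝ^m → ℝ by g(a) = ∑_{i<j} [ ((m−2)a_i + 1)² + ((m−2)a_j + 1)² + (m−2)(a_i − a_j)² ]. Then, over the affine set { a ∈ ℝ^m : ∑_{i=1}^m a_i = m(m+1)/2 }, the function g attains its minimum uniquely at the point a_i = (m+1)/2 for all i, and the minimum value is m³(m−1)³/4. That is, for every a ∈ ℝ^m with ∑_i a_i = m(m+1)/2 one has g(a) ≥ m³(m−1)³/4, with equality if and only if a_i = (m+1)/2 for every i. -/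
open Finset

lemma split_sum (m : ℕ) (f : Fin m → Fin m → ℝ) (hf : ∀ i j, f i j = f j i) :
    2 * (∑ i, ∑ j, if i < j then f i j else 0)
      = (∑ i, ∑ j, f i j) - ∑ i, f i i := by
  have h1 : (∑ i, ∑ j, if i < j then f i j else 0)
      = ∑ i, ∑ j, if j < i then f i j else 0 := by
    rw [Finset.sum_comm]
    refine Finset.sum_congr rfl fun i _ => Finset.sum_congr rfl fun j _ => ?_
    by_cases h : j < i <;> simp [h, hf i j]
  have h2 : (∑ i, ∑ j, if i < j then f i j else 0)
      + (∑ i, ∑ j, if j < i then f i j else 0)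
      = (∑ i, ∑ j, f i j) - ∑ i, ∑ j, if i = j then f i j else 0 := by
    rw [← Finset.sum_add_distrib, eq_sub_iff_add_eq, ← Finset.sum_add_distrib]
    refine Finset.sum_congr rfl fun i _ => ?_
    rw [← Finset.sum_add_distrib, ← Finset.sum_add_distrib]
    refine Finset.sum_congr rfl fun j _ => ?_
    rcases lt_trichotomy i j with h | h | h
    · simp [h, h.ne, (not_lt.mpr h.le : ¬ j < i)]
    · simp [h]
    · simp [h, h.ne', (not_lt.mpr h.le : ¬ i < j)]
  have h3 : (∑ i, ∑ j, if i = j then f i j else 0) = ∑ i, f i i := by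
    refine Finset.sum_congr rfl fun i _ => ?_
    simp
  rw [two_mul]
  nth_rewrite 2 [h1]
  rw [h2, h3]

lemma dsum (n : ℕ) (x : Fin n → ℝ) (A B C D : ℝ) :
    ∑ i, ∑ j, (A*(x i)^2 + A*(x j)^2 + B*(x i * x j) + C*(x i) + C*(x j) + D)
      = 2*A*(n:ℝ)*(∑ i, (x i)^2) + B*(∑ i, x i)^2 + 2*C*(n:ℝ)*(∑ i, x i) + D*(n:ℝ)^2 := by
  have hrow : ∀ i : Fin n, ∑ j, (A*(x i)^2 + A*(x j)^2 + B*(x i * x j) + C*(x i) + C*(x j) + D)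
      = (n:ℝ)*(A*(x i)^2) + A*(∑ j, (x j)^2) + (B*(x i))*(∑ j, x j)
        + (n:ℝ)*(C*(x i)) + C*(∑ j, x j) + (n:ℝ)*D := by
    intro i
    simp only [Finset.sum_add_distrib, Finset.sum_const, nsmul_eq_mul, Finset.card_univ,
      Fintype.card_fin, ← Finset.mul_sum, mul_assoc]
  rw [Finset.sum_congr rfl fun i _ => hrow i]
  simp only [Finset.sum_add_distrib, Finset.sum_const, nsmul_eq_mul, Finset.card_univ,
    Fintype.card_fin, ← Finset.mul_sum, ← Finset.sum_mul]
  ring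

lemma main_aux (m : ℕ) (a : Fin m → ℝ)
    (hsum : ∑ i, a i = (m : ℝ) * ((m : ℝ) + 1) / 2) :
    (∑ i, ∑ j, if i < j then
        (((m : ℝ) - 2) * a i + 1)^2 + (((m : ℝ) - 2) * a j + 1)^2
          + ((m : ℝ) - 2) * (a i - a j)^2
      else 0)
      = (m : ℝ)^3 * ((m : ℝ) - 1)^3 / 4
        + (((m : ℝ) - 2) * ((m : ℝ)^2 - 2*(m : ℝ) + 2)) * ∑ i, (a i - ((m : ℝ) + 1)/2)^2 := by
  set M : ℝ := (m : ℝ) with hM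
  have hsplit := split_sum m (fun i j =>
    ((M - 2) * a i + 1)^2 + ((M - 2) * a j + 1)^2 + (M - 2) * (a i - a j)^2)
    (fun i j => by ring)
  have hfull : (∑ i : Fin m, ∑ j : Fin m,
        (((M - 2) * a i + 1)^2 + ((M - 2) * a j + 1)^2 + (M - 2) * (a i - a j)^2))
      = 2*((M-2)*(M-1))*M*(∑ i, (a i)^2) + (-2*(M-2))*(∑ i, a i)^2
        + 2*(2*(M-2))*M*(∑ i, a i) + 2*M^2 := by
    calc (∑ i : Fin m, ∑ j : Fin m,
          (((M - 2) * a i + 1)^2 + ((M - 2) * a j + 1)^2 + (M - 2) * (a i - a j)^2))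
        = ∑ i : Fin m, ∑ j : Fin m,
            (((M-2)*(M-1))*(a i)^2 + ((M-2)*(M-1))*(a j)^2 + (-2*(M-2))*(a i * a j)
              + (2*(M-2))*(a i) + (2*(M-2))*(a j) + 2) :=
          Finset.sum_congr rfl fun i _ => Finset.sum_congr rfl fun j _ => by ring
      _ = _ := by rw [dsum m a ((M-2)*(M-1)) (-2*(M-2)) (2*(M-2)) 2, ← hM]
  have hdiag : (∑ i : Fin m,
        (((M - 2) * a i + 1)^2 + ((M - 2) * a i + 1)^2 + (M - 2) * (a i - a i)^2))
      = 2*(M-2)^2*(∑ i, (a i)^2) + 4*(M-2)*(∑ i, a i) + 2*M := by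
    calc (∑ i : Fin m,
          (((M - 2) * a i + 1)^2 + ((M - 2) * a i + 1)^2 + (M - 2) * (a i - a i)^2))
        = ∑ i : Fin m, (2*(M-2)^2*(a i)^2 + 4*(M-2)*(a i) + 2) :=
          Finset.sum_congr rfl fun i _ => by ring
      _ = _ := by
          simp only [Finset.sum_add_distrib, Finset.sum_const, nsmul_eq_mul, Finset.card_univ,
            Fintype.card_fin, ← Finset.mul_sum, mul_assoc, ← hM]
          ring
  have hQ2 : (∑ i, (a i)^2)
      = (∑ i, (a i - (M + 1)/2)^2) + M*(M+1)^2/4 := by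
    have hQT : (∑ i, (a i - (M + 1)/2)^2)
        = (∑ i, (a i)^2) - (M+1)*(∑ i, a i) + M*(M+1)^2/4 := by
      calc (∑ i, (a i - (M + 1)/2)^2)
          = ∑ i : Fin m, ((a i)^2 - (M+1)*(a i) + (M+1)^2/4) :=
            Finset.sum_congr rfl fun i _ => by ring
        _ = _ := by
            simp only [Finset.sum_add_distrib, Finset.sum_sub_distrib, Finset.sum_const,
              nsmul_eq_mul, Finset.card_univ, Fintype.card_fin, ← Finset.mul_sum, ← hM]
            ring
    rw [hQT, hsum]; ring
  rw [hfull, hdiag, hsum, hQ2] at hsplit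
  linear_combination hsplit / 2

theorem stmt_18 (m : ℕ) (hm : 3 ≤ m) (a : Fin m → ℝ)
    (hsum : ∑ i, a i = (m : ℝ) * ((m : ℝ) + 1) / 2) :
    ((∑ i, ∑ j, if i < j then
        (((m : ℝ) - 2) * a i + 1)^2 + (((m : ℝ) - 2) * a j + 1)^2
          + ((m : ℝ) - 2) * (a i - a j)^2
      else 0)
      ≥ (m : ℝ)^3 * ((m : ℝ) - 1)^3 / 4) ∧
    ((∑ i, ∑ j, if i < j then
        (((m : ℝ) - 2) * a i + 1)^2 + (((m : ℝ) - 2) * a j + 1)^2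
          + ((m : ℝ) - 2) * (a i - a j)^2
      else 0)
      = (m : ℝ)^3 * ((m : ℝ) - 1)^3 / 4
      ↔ ∀ i, a i = ((m : ℝ) + 1) / 2) := by
  have hmain := main_aux m a hsum
  have hM3 : (3:ℝ) ≤ (m:ℝ) := by exact_mod_cast hm
  have hKpos : 0 < ((m:ℝ) - 2) * ((m:ℝ)^2 - 2*(m:ℝ) + 2) := by nlinarith [sq_nonneg ((m:ℝ) - 1)]
  have hTnn : 0 ≤ ∑ i, (a i - ((m:ℝ) + 1)/2)^2 :=
    Finset.sum_nonneg fun i _ => sq_nonneg _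
  constructor
  · rw [ge_iff_le, hmain]
    nlinarith [mul_nonneg hKpos.le hTnn]
  · rw [hmain]
    constructor
    · intro h
      have hT0 : (∑ i, (a i - ((m:ℝ) + 1)/2)^2) = 0 := by
        rcases lt_or_eq_of_le hTnn with hlt | heq
        · exfalso; nlinarith [mul_pos hKpos hlt]
        · exact heq.symm
      intro i
      have hi := (Finset.sum_eq_zero_iff_of_nonneg
        (fun i (_ : i ∈ Finset.univ) => sq_nonneg (a i - ((m:ℝ) + 1)/2))).mp hT0
        i (Finset.mem_univ i)
      have := pow_eq_zero_iff (n := 2) (by norm_num) |>.mp hi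
      linarith
    · intro h
      have hT0 : (∑ i, (a i - ((m:ℝ) + 1)/2)^2) = 0 :=
        Finset.sum_eq_zero fun i _ => by rw [h i]; ring
      rw [hT0]; ring
end
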